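/- Let A, B, C : ℝ → ℝ be functions with A constant (A' = 0) and B, C twice differentiable satisfying B' = -2B and C' = 2C. Define P := -2A + B - C. Then P is three times differentiable with P''' = 4 P', and moreover A = (1/8) P'' - (1/2) P, B = (1/8) P'' - (1/4) P', and C = -(1/8) P'' - (1/4) P'. -/

import Mathlib

/-- From `A' = 0`, `B' = -2B`, `C' = 2C` (with `B`, `C` twice differentiable),
the function `P := -2A + B - C` is three times differentiable, satisfies
`P''' = 4 P'`, and `A`, `B`, `C` can be recovered from `P`, `P'`, `P''`. -/
theorem P_representation (A B C : ℝ → ℝ)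
    (hA : ∀ t, HasDerivAt A 0 t)
    (hB : ∀ t, HasDerivAt B (-2 * B t) t) (hB2 : Differentiable ℝ (deriv B))
    (hC : ∀ t, HasDerivAt C (2 * C t) t) (hC2 : Differentiable ℝ (deriv C)) :
    let P : ℝ → ℝ := fun t => -2 * A t + B t - C t
    Differentiable ℝ P ∧ Differentiable ℝ (deriv P) ∧
      Differentiable ℝ (deriv (deriv P)) ∧
      (∀ t, deriv (deriv (deriv P)) t = 4 * deriv P t) ∧
      (∀ t, A t = 1 / 8 * deriv (deriv P) t - 1 / 2 * P t) ∧
      (∀ t, B t = 1 / 8 * deriv (deriv P) t - 1 / 4 * deriv P t) ∧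
      (∀ t, C t = -(1 / 8) * deriv (deriv P) t - 1 / 4 * deriv P t) := by
  intro P
  have hP : ∀ t, HasDerivAt P (-2 * B t - 2 * C t) t := by
    intro t
    have h := ((hA t).const_mul (-2)).add (hB t) |>.sub (hC t)
    convert h using 1
    case e'_9 => ring
    all_goals rfl
  have hP' : deriv P = fun t => -2 * B t - 2 * C t := funext fun t => (hP t).deriv
  have hP2 : ∀ t, HasDerivAt (deriv P) (4 * B t - 4 * C t) t := by
    intro t
    rw [hP']
    have h := ((hB t).const_mul (-2)).sub ((hC t).const_mul 2)
    convert h using 1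
    case e'_9 => ring
    all_goals rfl
  have hP2' : deriv (deriv P) = fun t => 4 * B t - 4 * C t :=
    funext fun t => (hP2 t).deriv
  have hP3 : ∀ t, HasDerivAt (deriv (deriv P)) (-8 * B t - 8 * C t) t := by
    intro t
    rw [hP2']
    have h := ((hB t).const_mul 4).sub ((hC t).const_mul 4)
    convert h using 1
    case e'_9 => ring
    all_goals rfl
  have e1 : ∀ t, deriv P t = -2 * B t - 2 * C t := fun t => (hP t).deriv
  have e2 : ∀ t, deriv (deriv P) t = 4 * B t - 4 * C t := fun t => (hP2 t).deriv
  have e3 : ∀ t, deriv (deriv (deriv P)) t = -8 * B t - 8 * C t := fun t => (hP3 t).deriv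
  refine ⟨fun t => (hP t).differentiableAt, fun t => (hP2 t).differentiableAt,
    fun t => (hP3 t).differentiableAt, fun t => ?_, fun t => ?_, fun t => ?_, fun t => ?_⟩
  · rw [e3, e1]; ring
  · rw [e2]; show A t = _ - 1/2 * (-2 * A t + B t - C t); ring
  · rw [e2, e1]; ring
  · rw [e2, e1]; ring
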